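/- In the mixed logit model, define the differential response rate under a uniform price change r ≠ 0 as φ_{1,2} := (S_1(P̃)/S_2(P̃)) / (S_1(P)/S_2(P)), where P = P̃ + (r,r). If the data are generated by the model with |γ1| < 1, then φ_{1,2} > 1 implies γ1 > 0 and φ_{1,2} < 1 implies γ1 < 0. -/

import Mathlib

open MeasureTheory

/-- Conditional logit share of product 1 at prices (q1, q2). -/
noncomputable def s1 (a b γ0 γ1 q1 q2 μ : ℝ) : ℝ :=
  Real.exp (a - b * q1 + μ) /
    (1 + Real.exp (a - b * q1 + μ) + Real.exp (a - b * q2 + (γ0 + μ * γ1) + μ))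

/-- Conditional logit share of product 2 at prices (q1, q2). -/
noncomputable def s2 (a b γ0 γ1 q1 q2 μ : ℝ) : ℝ :=
  Real.exp (a - b * q2 + (γ0 + μ * γ1) + μ) /
    (1 + Real.exp (a - b * q1 + μ) + Real.exp (a - b * q2 + (γ0 + μ * γ1) + μ))

/-- Aggregate demand for product 1. -/
noncomputable def S1 (a b γ0 γ1 lo hi : ℝ) (f : ℝ → ℝ) (q1 q2 : ℝ) : ℝ :=
  ∫ μ in lo..hi, s1 a b γ0 γ1 q1 q2 μ * f μ

/-- Aggregate demand for product 2. -/
noncomputable def S2 (a b γ0 γ1 lo hi : ℝ) (f : ℝ → ℝ) (q1 q2 : ℝ) : ℝ :=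
  ∫ μ in lo..hi, s2 a b γ0 γ1 q1 q2 μ * f μ

/- ### Auxiliary lemmas -/

/-- A Chebyshev-type correlation inequality for interval integrals. -/
lemma chebyshev_aux (lo hi : ℝ) (hlo : lo ≤ hi) (h w1 w2 : ℝ → ℝ)
    (hh : ContinuousOn h (Set.Icc lo hi))
    (hw1 : ContinuousOn w1 (Set.Icc lo hi))
    (hw2 : ContinuousOn w2 (Set.Icc lo hi))
    (hK : ∀ μ ∈ Set.Icc lo hi, ∀ ν ∈ Set.Icc lo hi,
      (h μ - h ν) * (w1 μ * w2 ν - w1 ν * w2 μ) ≤ 0) :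
    (∫ μ in lo..hi, h μ * w1 μ) * (∫ μ in lo..hi, w2 μ) ≤
      (∫ μ in lo..hi, w1 μ) * (∫ μ in lo..hi, h μ * w2 μ) := by
  have huIcc : Set.uIcc lo hi = Set.Icc lo hi := Set.uIcc_of_le hlo
  have i1 : IntervalIntegrable w1 volume lo hi :=
    ContinuousOn.intervalIntegrable (by rwa [huIcc])
  have i2 : IntervalIntegrable w2 volume lo hi :=
    ContinuousOn.intervalIntegrable (by rwa [huIcc])
  have ih1 : IntervalIntegrable (fun ν => h ν * w1 ν) volume lo hi :=
    ContinuousOn.intervalIntegrable (by rw [huIcc]; exact hh.mul hw1)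
  have ih2 : IntervalIntegrable (fun ν => h ν * w2 ν) volume lo hi :=
    ContinuousOn.intervalIntegrable (by rw [huIcc]; exact hh.mul hw2)
  set A := ∫ μ in lo..hi, h μ * w1 μ with hA
  set B := ∫ μ in lo..hi, w1 μ with hB
  set C := ∫ μ in lo..hi, h μ * w2 μ with hC
  set D := ∫ μ in lo..hi, w2 μ with hD
  have inner : ∀ μ : ℝ,
      (∫ ν in lo..hi, (h μ - h ν) * (w1 μ * w2 ν - w1 ν * w2 μ))
        = h μ * w1 μ * D - h μ * w2 μ * B - w1 μ * C + w2 μ * A := by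
    intro μ
    have e : (fun ν => (h μ - h ν) * (w1 μ * w2 ν - w1 ν * w2 μ))
        = fun ν => (h μ * w1 μ) * w2 ν - (h μ * w2 μ) * w1 ν
            - w1 μ * (h ν * w2 ν) + w2 μ * (h ν * w1 ν) := by
      funext ν; ring
    rw [e, intervalIntegral.integral_add
          (((i2.const_mul _).sub (i1.const_mul _)).sub (ih2.const_mul _)) (ih1.const_mul _),
        intervalIntegral.integral_sub
          ((i2.const_mul _).sub (i1.const_mul _)) (ih2.const_mul _),
        intervalIntegral.integral_sub (i2.const_mul _) (i1.const_mul _),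
        intervalIntegral.integral_const_mul, intervalIntegral.integral_const_mul,
        intervalIntegral.integral_const_mul, intervalIntegral.integral_const_mul]
  have key : (∫ μ in lo..hi, ∫ ν in lo..hi, (h μ - h ν) * (w1 μ * w2 ν - w1 ν * w2 μ))
      = 2 * (A * D - B * C) := by
    simp only [inner]
    rw [intervalIntegral.integral_add
          (((ih1.mul_const _).sub (ih2.mul_const _)).sub (i1.mul_const _)) (i2.mul_const _),
        intervalIntegral.integral_sub
          ((ih1.mul_const _).sub (ih2.mul_const _)) (i1.mul_const _),
        intervalIntegral.integral_sub (ih1.mul_const _) (ih2.mul_const _),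
        intervalIntegral.integral_mul_const, intervalIntegral.integral_mul_const,
        intervalIntegral.integral_mul_const, intervalIntegral.integral_mul_const]
    ring
  have hnp : ∀ g : ℝ → ℝ, (∀ u ∈ Set.Icc lo hi, g u ≤ 0) → (∫ u in lo..hi, g u) ≤ 0 := by
    intro g hg
    have h0 : (0:ℝ) ≤ ∫ u in lo..hi, -g u :=
      intervalIntegral.integral_nonneg hlo (fun u hu => by linarith [hg u hu])
    rw [intervalIntegral.integral_neg] at h0
    linarith
  have hintnp :
      (∫ μ in lo..hi, ∫ ν in lo..hi, (h μ - h ν) * (w1 μ * w2 ν - w1 ν * w2 μ)) ≤ 0 := by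
    apply hnp
    intro μ hμ
    exact hnp _ (fun ν hν => hK μ hμ ν hν)
  rw [key] at hintnp
  linarith

lemma s2_pos (a b γ0 γ1 q1 q2 μ : ℝ) : 0 < s2 a b γ0 γ1 q1 q2 μ := by
  unfold s2; positivity

lemma s2_cont (a b γ0 γ1 q1 q2 : ℝ) : Continuous (fun μ => s2 a b γ0 γ1 q1 q2 μ) := by
  unfold s2
  apply Continuous.div (by continuity) (by continuity)
  intro x; positivity

lemma s1_eq (a b γ0 γ1 q1 q2 μ : ℝ) :
    s1 a b γ0 γ1 q1 q2 μ =
      Real.exp (b * q2 - b * q1 - γ0) * (Real.exp (-(μ * γ1)) * s2 a b γ0 γ1 q1 q2 μ) := by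
  unfold s1 s2
  rw [show a - b * q1 + μ
      = (b * q2 - b * q1 - γ0) + (-(μ * γ1)) + (a - b * q2 + (γ0 + μ * γ1) + μ) by ring,
    Real.exp_add, Real.exp_add, mul_div_assoc, mul_assoc]

lemma s2_cross (a b γ0 γ1 p1 p2 r : ℝ) (hb : 0 < b) (hr : 0 < r) (hγ : -1 ≤ γ1)
    {μ ν : ℝ} (hμν : μ ≤ ν) :
    s2 a b γ0 γ1 p1 p2 ν * s2 a b γ0 γ1 (p1 + r) (p2 + r) μ ≤
      s2 a b γ0 γ1 p1 p2 μ * s2 a b γ0 γ1 (p1 + r) (p2 + r) ν := by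
  unfold s2
  have e1 : ∀ m : ℝ, a - b * (p1 + r) + m = (-(b * r)) + (a - b * p1 + m) := by
    intro m; ring
  have e2 : ∀ m : ℝ, a - b * (p2 + r) + (γ0 + m * γ1) + m
      = (-(b * r)) + (a - b * p2 + (γ0 + m * γ1) + m) := by
    intro m; ring
  rw [e1 μ, e1 ν, e2 μ, e2 ν]
  simp only [Real.exp_add (-(b * r))]
  set t := Real.exp (-(b * r)) with htdef
  set xμ := Real.exp (a - b * p1 + μ) with hxμ
  set xν := Real.exp (a - b * p1 + ν) with hxν
  set yμ := Real.exp (a - b * p2 + (γ0 + μ * γ1) + μ) with hyμ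
  set yν := Real.exp (a - b * p2 + (γ0 + ν * γ1) + ν) with hyν
  have ht0 : 0 < t := Real.exp_pos _
  have ht1 : t ≤ 1 := by
    rw [htdef, show (1:ℝ) = Real.exp 0 by rw [Real.exp_zero]]
    exact Real.exp_le_exp.mpr (by nlinarith)
  have hx : xμ ≤ xν := Real.exp_le_exp.mpr (by linarith)
  have hy : yμ ≤ yν := Real.exp_le_exp.mpr
    (by nlinarith [mul_nonneg (sub_nonneg.2 hμν) (by linarith : (0:ℝ) ≤ 1 + γ1)])
  have hxμ0 : 0 < xμ := Real.exp_pos _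
  have hxν0 : 0 < xν := Real.exp_pos _
  have hyμ0 : 0 < yμ := Real.exp_pos _
  have hyν0 : 0 < yν := Real.exp_pos _
  rw [div_mul_div_comm, div_mul_div_comm, div_le_div_iff₀ (by positivity) (by positivity)]
  nlinarith [mul_nonneg (mul_nonneg (mul_nonneg ht0.le (mul_pos hyμ0 hyν0).le)
      (sub_nonneg.2 ht1)) (by linarith : (0:ℝ) ≤ xν + yν - xμ - yμ)]

set_option maxHeartbeats 2000000 in
/-- The differential response rate under a total-market test signs γ1. -/
theorem total_market_test (a b γ0 γ1 p1 p2 lo hi r : ℝ) (f : ℝ → ℝ)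
    (hb : 0 < b) (hγ1 : |γ1| < 1) (hlo : lo < hi) (hr : 0 < r)
    (hfc : ContinuousOn f (Set.Icc lo hi))
    (hfpos : ∀ μ ∈ Set.Icc lo hi, 0 < f μ)
    (hfint : ∫ x in lo..hi, f x = 1) :
    ((S1 a b γ0 γ1 lo hi f p1 p2 / S2 a b γ0 γ1 lo hi f p1 p2)
        / (S1 a b γ0 γ1 lo hi f (p1 + r) (p2 + r) / S2 a b γ0 γ1 lo hi f (p1 + r) (p2 + r))
        > 1 → 0 < γ1) ∧
    ((S1 a b γ0 γ1 lo hi f p1 p2 / S2 a b γ0 γ1 lo hi f p1 p2)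
        / (S1 a b γ0 γ1 lo hi f (p1 + r) (p2 + r) / S2 a b γ0 γ1 lo hi f (p1 + r) (p2 + r))
        < 1 → γ1 < 0) := by
  obtain ⟨hγlo, hγhi⟩ := abs_lt.mp hγ1
  set h : ℝ → ℝ := fun μ => Real.exp (-(μ * γ1)) with hhdef
  set w1 : ℝ → ℝ := fun μ => s2 a b γ0 γ1 p1 p2 μ * f μ with hw1def
  set w2 : ℝ → ℝ := fun μ => s2 a b γ0 γ1 (p1 + r) (p2 + r) μ * f μ with hw2def
  set c : ℝ := Real.exp (b * p2 - b * p1 - γ0) with hcdef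
  have hcpos : 0 < c := Real.exp_pos _
  have huIcc : Set.uIcc lo hi = Set.Icc lo hi := Set.uIcc_of_le hlo.le
  -- continuity
  have hhc : ContinuousOn h (Set.Icc lo hi) := by
    apply Continuous.continuousOn; continuity
  have hw1c : ContinuousOn w1 (Set.Icc lo hi) :=
    (s2_cont a b γ0 γ1 p1 p2).continuousOn.mul hfc
  have hw2c : ContinuousOn w2 (Set.Icc lo hi) :=
    (s2_cont a b γ0 γ1 (p1 + r) (p2 + r)).continuousOn.mul hfc
  -- the four basic integrals
  set A := ∫ μ in lo..hi, h μ * w1 μ with hA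
  set B := ∫ μ in lo..hi, w1 μ with hB
  set C := ∫ μ in lo..hi, h μ * w2 μ with hC
  set D := ∫ μ in lo..hi, w2 μ with hD
  -- positivity of the integrals
  have hApos : 0 < A :=
    intervalIntegral.intervalIntegral_pos_of_pos_on
      (ContinuousOn.intervalIntegrable (by rw [huIcc]; exact hhc.mul hw1c))
      (fun x hx => mul_pos (Real.exp_pos _)
        (mul_pos (s2_pos a b γ0 γ1 p1 p2 x) (hfpos x (Set.Ioo_subset_Icc_self hx)))) hlo
  have hBpos : 0 < B :=
    intervalIntegral.intervalIntegral_pos_of_pos_on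
      (ContinuousOn.intervalIntegrable (by rw [huIcc]; exact hw1c))
      (fun x hx => mul_pos (s2_pos a b γ0 γ1 p1 p2 x) (hfpos x (Set.Ioo_subset_Icc_self hx)))
      hlo
  have hCpos : 0 < C :=
    intervalIntegral.intervalIntegral_pos_of_pos_on
      (ContinuousOn.intervalIntegrable (by rw [huIcc]; exact hhc.mul hw2c))
      (fun x hx => mul_pos (Real.exp_pos _)
        (mul_pos (s2_pos a b γ0 γ1 (p1 + r) (p2 + r) x)
          (hfpos x (Set.Ioo_subset_Icc_self hx)))) hlo
  have hDpos : 0 < D :=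
    intervalIntegral.intervalIntegral_pos_of_pos_on
      (ContinuousOn.intervalIntegrable (by rw [huIcc]; exact hw2c))
      (fun x hx => mul_pos (s2_pos a b γ0 γ1 (p1 + r) (p2 + r) x)
        (hfpos x (Set.Ioo_subset_Icc_self hx))) hlo
  -- expressing aggregate demands
  have hS2t : S2 a b γ0 γ1 lo hi f p1 p2 = B := rfl
  have hS2r : S2 a b γ0 γ1 lo hi f (p1 + r) (p2 + r) = D := rfl
  have hS1t : S1 a b γ0 γ1 lo hi f p1 p2 = c * A := by
    rw [hA, ← intervalIntegral.integral_const_mul]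
    apply intervalIntegral.integral_congr
    intro μ _
    simp only [hhdef, hw1def, hcdef]
    rw [s1_eq]; ring
  have hS1r : S1 a b γ0 γ1 lo hi f (p1 + r) (p2 + r) = c * C := by
    rw [hC, ← intervalIntegral.integral_const_mul]
    apply intervalIntegral.integral_congr
    intro μ _
    simp only [hhdef, hw2def, hcdef]
    rw [s1_eq, show b * (p2 + r) - b * (p1 + r) - γ0 = b * p2 - b * p1 - γ0 by ring]
    ring
  have hφeq : (S1 a b γ0 γ1 lo hi f p1 p2 / S2 a b γ0 γ1 lo hi f p1 p2)
      / (S1 a b γ0 γ1 lo hi f (p1 + r) (p2 + r) / S2 a b γ0 γ1 lo hi f (p1 + r) (p2 + r))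
      = (A * D) / (B * C) := by
    rw [hS1t, hS1r, hS2t, hS2r]
    field_simp
  constructor
  · -- φ > 1 → 0 < γ1
    intro hgt
    by_contra hcon
    push_neg at hcon
    -- γ1 ≤ 0 : show A * D ≤ B * C
    have hK : ∀ μ ∈ Set.Icc lo hi, ∀ ν ∈ Set.Icc lo hi,
        (h μ - h ν) * (w1 μ * w2 ν - w1 ν * w2 μ) ≤ 0 := by
      intro μ hμ ν hν
      rcases le_total μ ν with hle | hle
      · have h1 : h μ - h ν ≤ 0 := by
          apply sub_nonpos.2
          apply Real.exp_le_exp.mpr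
          nlinarith [mul_nonneg (sub_nonneg.2 hle) (neg_nonneg.2 hcon)]
        have hcr := s2_cross a b γ0 γ1 p1 p2 r hb hr hγlo.le hle
        have h2 : 0 ≤ w1 μ * w2 ν - w1 ν * w2 μ := by
          simp only [hw1def, hw2def]
          nlinarith [mul_nonneg (mul_nonneg (hfpos μ hμ).le (hfpos ν hν).le)
            (sub_nonneg.2 hcr)]
        nlinarith [mul_nonneg (neg_nonneg.2 h1) h2]
      · have h1 : 0 ≤ h μ - h ν := by
          apply sub_nonneg.2
          apply Real.exp_le_exp.mpr
          nlinarith [mul_nonneg (sub_nonneg.2 hle) (neg_nonneg.2 hcon)]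
        have hcr := s2_cross a b γ0 γ1 p1 p2 r hb hr hγlo.le hle
        have h2 : w1 μ * w2 ν - w1 ν * w2 μ ≤ 0 := by
          simp only [hw1def, hw2def]
          nlinarith [mul_nonneg (mul_nonneg (hfpos μ hμ).le (hfpos ν hν).le)
            (sub_nonneg.2 hcr)]
        nlinarith [mul_nonneg h1 (neg_nonneg.2 h2)]
    have hAD : A * D ≤ B * C := chebyshev_aux lo hi hlo.le h w1 w2 hhc hw1c hw2c hK
    rw [hφeq] at hgt
    have : (A * D) / (B * C) ≤ 1 := div_le_one_of_le₀ hAD (by positivity)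
    linarith
  · -- φ < 1 → γ1 < 0
    intro hlt
    by_contra hcon
    push_neg at hcon
    -- 0 ≤ γ1 : show B * C ≤ A * D, via chebyshev with roles of w1, w2 swapped
    have hK : ∀ μ ∈ Set.Icc lo hi, ∀ ν ∈ Set.Icc lo hi,
        (h μ - h ν) * (w2 μ * w1 ν - w2 ν * w1 μ) ≤ 0 := by
      intro μ hμ ν hν
      rcases le_total μ ν with hle | hle
      · have h1 : 0 ≤ h μ - h ν := by
          apply sub_nonneg.2
          apply Real.exp_le_exp.mpr
          nlinarith [mul_nonneg (sub_nonneg.2 hle) hcon]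
        have hcr := s2_cross a b γ0 γ1 p1 p2 r hb hr hγlo.le hle
        have h2 : w2 μ * w1 ν - w2 ν * w1 μ ≤ 0 := by
          simp only [hw1def, hw2def]
          nlinarith [mul_nonneg (mul_nonneg (hfpos μ hμ).le (hfpos ν hν).le)
            (sub_nonneg.2 hcr)]
        nlinarith [mul_nonneg h1 (neg_nonneg.2 h2)]
      · have h1 : h μ - h ν ≤ 0 := by
          apply sub_nonpos.2
          apply Real.exp_le_exp.mpr
          nlinarith [mul_nonneg (sub_nonneg.2 hle) hcon]
        have hcr := s2_cross a b γ0 γ1 p1 p2 r hb hr hγlo.le hle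
        have h2 : 0 ≤ w2 μ * w1 ν - w2 ν * w1 μ := by
          simp only [hw1def, hw2def]
          nlinarith [mul_nonneg (mul_nonneg (hfpos μ hμ).le (hfpos ν hν).le)
            (sub_nonneg.2 hcr)]
        nlinarith [mul_nonneg (neg_nonneg.2 h1) h2]
    have hCB : C * B ≤ D * A := chebyshev_aux lo hi hlo.le h w2 w1 hhc hw2c hw1c hK
    rw [hφeq] at hlt
    have : (1:ℝ) ≤ (A * D) / (B * C) := by
      rw [le_div_iff₀ (by positivity)]
      nlinarith
    linarith
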